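/- The maximum loneliness of the four positive integer speeds 8, 1, 7, 15 equals 5/22; that is, ML(8, 1, 7, 15) = 5/22. -/
import Mathlib


/-- `dnn x` is the distance from `x` to the nearest integer:
`dnn x = min_{m : ℤ} |x - m|`. -/
noncomputable def dnn (x : ℝ) : ℝ := ⨅ m : ℤ, |x - m|

/-- The maximum loneliness of speeds `v 0, …, v (n-1)`:
`ML v = sup_{t : ℝ} min_{i} dnn (t * v i)`. -/
noncomputable def ML {n : ℕ} (v : Fin n → ℝ) : ℝ := ⨆ t : ℝ, ⨅ i, dnn (t * v i)

lemma dnn_bddBelow (x : ℝ) : BddBelow (Set.range fun m : ℤ => |x - m|) := by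
  refine ⟨0, ?_⟩
  rintro _ ⟨m, rfl⟩
  exact abs_nonneg _

lemma dnn_le_abs (x : ℝ) (m : ℤ) : dnn x ≤ |x - m| :=
  ciInf_le (dnn_bddBelow x) m

lemma dnn_nonneg (x : ℝ) : 0 ≤ dnn x :=
  le_ciInf fun m => abs_nonneg _

lemma dnn_ge (x : ℝ) (k : ℤ) (c : ℝ) (hc : 0 ≤ c) (h1 : (k : ℝ) + c ≤ x) (h2 : x ≤ (k : ℝ) + 1 - c) :
    c ≤ dnn x := by
  apply le_ciInf
  intro m
  rcases le_or_gt m k with h | h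
  · have hm : (m : ℝ) ≤ (k : ℝ) := by exact_mod_cast h
    rw [abs_of_nonneg (by linarith)]
    linarith
  · have hm : (k : ℝ) + 1 ≤ (m : ℝ) := by exact_mod_cast h
    rw [abs_of_nonpos (by linarith)]
    linarith

lemma dnn_add_int (x : ℝ) (m : ℤ) : dnn (x + m) = dnn x := by
  apply le_antisymm
  · apply le_ciInf
    intro k
    have : |x + (m : ℝ) - ((k + m : ℤ) : ℝ)| = |x - k| := by
      push_cast; ring_nf
    calc dnn (x + m) ≤ |x + (m : ℝ) - ((k + m : ℤ) : ℝ)| := dnn_le_abs _ _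
    _ = |x - k| := this
  · apply le_ciInf
    intro k
    have : |x - ((k - m : ℤ) : ℝ)| = |x + m - k| := by
      push_cast; ring_nf
    calc dnn x ≤ |x - ((k - m : ℤ) : ℝ)| := dnn_le_abs _ _
    _ = |x + m - k| := this

lemma dnn_mul_fract (t : ℝ) (n : ℕ) : dnn (t * n) = dnn (Int.fract t * n) := by
  have h : t * n = Int.fract t * n + ((⌊t⌋ * n : ℤ) : ℝ) := by
    rw [Int.fract]; push_cast; ring
  rw [h, dnn_add_int]

/-- Key upper-bound lemma: for every `t`, one of the four distances is ≤ 5/22. -/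
lemma key (t : ℝ) : ∃ i : Fin 4, dnn (t * ![(8 : ℝ), 1, 7, 15] i) ≤ 5 / 22 := by
  set y := Int.fract t with hy
  have h0 : 0 ≤ y := Int.fract_nonneg t
  have h1 : y < 1 := Int.fract_lt_one t
  have e8 : dnn (t * 8) = dnn (y * 8) := by
    have := dnn_mul_fract t 8; norm_num at this ⊢; exact this
  have e1 : dnn (t * 1) = dnn (y * 1) := by
    have := dnn_mul_fract t 1; norm_num at this ⊢; exact this
  have e7 : dnn (t * 7) = dnn (y * 7) := by
    have := dnn_mul_fract t 7; norm_num at this ⊢; exact this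
  have e15 : dnn (t * 15) = dnn (y * 15) := by
    have := dnn_mul_fract t 15; norm_num at this ⊢; exact this
  -- case analysis on y, with thresholds in units of 1/1232
  rcases le_or_gt y (280 / 1232) with h | h
  · -- i = 1 (speed 1), m = 0
    refine ⟨1, ?_⟩
    show dnn (t * 1) ≤ 5 / 22
    rw [e1]
    calc dnn (y * 1) ≤ |y * 1 - ((0 : ℤ) : ℝ)| := dnn_le_abs _ _
    _ ≤ 5 / 22 := by rw [abs_le]; constructor <;> push_cast <;> linarith
  rcases le_or_gt (952 / 1232) y with h' | h'
  · -- i = 1 (speed 1), m = 1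
    refine ⟨1, ?_⟩
    show dnn (t * 1) ≤ 5 / 22
    rw [e1]
    calc dnn (y * 1) ≤ |y * 1 - ((1 : ℤ) : ℝ)| := dnn_le_abs _ _
    _ ≤ 5 / 22 := by rw [abs_le]; constructor <;> push_cast <;> linarith
  rcases le_or_gt y (312 / 1232) with h2 | h2
  · -- i = 0 (speed 8), m = 2
    refine ⟨0, ?_⟩
    show dnn (t * 8) ≤ 5 / 22
    rw [e8]
    calc dnn (y * 8) ≤ |y * 8 - ((2 : ℤ) : ℝ)| := dnn_le_abs _ _
    _ ≤ 5 / 22 := by rw [abs_le]; constructor <;> push_cast <;> linarith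
  rcases le_or_gt y (392 / 1232) with h3 | h3
  · -- i = 2 (speed 7), m = 2
    refine ⟨2, ?_⟩
    show dnn (t * 7) ≤ 5 / 22
    rw [e7]
    calc dnn (y * 7) ≤ |y * 7 - ((2 : ℤ) : ℝ)| := dnn_le_abs _ _
    _ ≤ 5 / 22 := by rw [abs_le]; constructor <;> push_cast <;> linarith
  rcases le_or_gt y (427 / 1232) with h4 | h4
  · -- i = 3 (speed 15), m = 5
    refine ⟨3, ?_⟩
    show dnn (t * 15) ≤ 5 / 22
    rw [e15]
    calc dnn (y * 15) ≤ |y * 15 - ((5 : ℤ) : ℝ)| := dnn_le_abs _ _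
    _ ≤ 5 / 22 := by rw [abs_le]; constructor <;> push_cast <;> linarith
  rcases le_or_gt y (488 / 1232) with h5 | h5
  · -- i = 0 (speed 8), m = 3
    refine ⟨0, ?_⟩
    show dnn (t * 8) ≤ 5 / 22
    rw [e8]
    calc dnn (y * 8) ≤ |y * 8 - ((3 : ℤ) : ℝ)| := dnn_le_abs _ _
    _ ≤ 5 / 22 := by rw [abs_le]; constructor <;> push_cast <;> linarith
  rcases le_or_gt y (568 / 1232) with h6 | h6
  · -- i = 2 (speed 7), m = 3
    refine ⟨2, ?_⟩
    show dnn (t * 7) ≤ 5 / 22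
    rw [e7]
    calc dnn (y * 7) ≤ |y * 7 - ((3 : ℤ) : ℝ)| := dnn_le_abs _ _
    _ ≤ 5 / 22 := by rw [abs_le]; constructor <;> push_cast <;> linarith
  rcases le_or_gt y (581 / 1232) with h7 | h7
  · -- i = 3 (speed 15), m = 7
    refine ⟨3, ?_⟩
    show dnn (t * 15) ≤ 5 / 22
    rw [e15]
    calc dnn (y * 15) ≤ |y * 15 - ((7 : ℤ) : ℝ)| := dnn_le_abs _ _
    _ ≤ 5 / 22 := by rw [abs_le]; constructor <;> push_cast <;> linarith
  rcases le_or_gt y (651 / 1232) with h8 | h8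
  · -- i = 0 (speed 8), m = 4
    refine ⟨0, ?_⟩
    show dnn (t * 8) ≤ 5 / 22
    rw [e8]
    calc dnn (y * 8) ≤ |y * 8 - ((4 : ℤ) : ℝ)| := dnn_le_abs _ _
    _ ≤ 5 / 22 := by rw [abs_le]; constructor <;> push_cast <;> linarith
  rcases le_or_gt y (664 / 1232) with h9 | h9
  · -- i = 3 (speed 15), m = 8
    refine ⟨3, ?_⟩
    show dnn (t * 15) ≤ 5 / 22
    rw [e15]
    calc dnn (y * 15) ≤ |y * 15 - ((8 : ℤ) : ℝ)| := dnn_le_abs _ _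
    _ ≤ 5 / 22 := by rw [abs_le]; constructor <;> push_cast <;> linarith
  rcases le_or_gt y (744 / 1232) with h10 | h10
  · -- i = 2 (speed 7), m = 4
    refine ⟨2, ?_⟩
    show dnn (t * 7) ≤ 5 / 22
    rw [e7]
    calc dnn (y * 7) ≤ |y * 7 - ((4 : ℤ) : ℝ)| := dnn_le_abs _ _
    _ ≤ 5 / 22 := by rw [abs_le]; constructor <;> push_cast <;> linarith
  rcases le_or_gt y (805 / 1232) with h11 | h11
  · -- i = 0 (speed 8), m = 5
    refine ⟨0, ?_⟩
    show dnn (t * 8) ≤ 5 / 22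
    rw [e8]
    calc dnn (y * 8) ≤ |y * 8 - ((5 : ℤ) : ℝ)| := dnn_le_abs _ _
    _ ≤ 5 / 22 := by rw [abs_le]; constructor <;> push_cast <;> linarith
  rcases le_or_gt y (840 / 1232) with h12 | h12
  · -- i = 3 (speed 15), m = 10
    refine ⟨3, ?_⟩
    show dnn (t * 15) ≤ 5 / 22
    rw [e15]
    calc dnn (y * 15) ≤ |y * 15 - ((10 : ℤ) : ℝ)| := dnn_le_abs _ _
    _ ≤ 5 / 22 := by rw [abs_le]; constructor <;> push_cast <;> linarith
  rcases le_or_gt y (920 / 1232) with h13 | h13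
  · -- i = 2 (speed 7), m = 5
    refine ⟨2, ?_⟩
    show dnn (t * 7) ≤ 5 / 22
    rw [e7]
    calc dnn (y * 7) ≤ |y * 7 - ((5 : ℤ) : ℝ)| := dnn_le_abs _ _
    _ ≤ 5 / 22 := by rw [abs_le]; constructor <;> push_cast <;> linarith
  · -- i = 0 (speed 8), m = 6
    refine ⟨0, ?_⟩
    show dnn (t * 8) ≤ 5 / 22
    rw [e8]
    calc dnn (y * 8) ≤ |y * 8 - ((6 : ℤ) : ℝ)| := dnn_le_abs _ _
    _ ≤ 5 / 22 := by rw [abs_le]; constructor <;> push_cast <;> linarith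

theorem stmt_17 : ML ![(8 : ℝ), 1, 7, 15] = 5 / 22 := by
  have upper : ∀ t : ℝ, (⨅ i, dnn (t * ![(8 : ℝ), 1, 7, 15] i)) ≤ 5 / 22 := by
    intro t
    obtain ⟨i, hi⟩ := key t
    refine le_trans (ciInf_le ?_ i) hi
    exact ⟨0, by rintro _ ⟨j, rfl⟩; exact dnn_nonneg _⟩
  unfold ML
  apply le_antisymm
  · exact ciSup_le upper
  · have hb : BddAbove (Set.range fun t : ℝ => ⨅ i, dnn (t * ![(8 : ℝ), 1, 7, 15] i)) :=
      ⟨5 / 22, by rintro _ ⟨t, rfl⟩; exact upper t⟩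
    refine le_trans ?_ (le_ciSup hb (15 / 22 : ℝ))
    apply le_ciInf
    intro i
    fin_cases i
    · show (5 : ℝ) / 22 ≤ dnn (15 / 22 * 8)
      have := dnn_ge (15 / 22 * 8) 5 (5 / 22) (by norm_num) (by push_cast; norm_num) (by push_cast; norm_num)
      exact this
    · show (5 : ℝ) / 22 ≤ dnn (15 / 22 * 1)
      exact dnn_ge _ 0 (5 / 22) (by norm_num) (by push_cast; norm_num) (by push_cast; norm_num)
    · show (5 : ℝ) / 22 ≤ dnn (15 / 22 * 7)
      exact dnn_ge _ 4 (5 / 22) (by norm_num) (by push_cast; norm_num) (by push_cast; norm_num)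
    · show (5 : ℝ) / 22 ≤ dnn (15 / 22 * 15)
      exact dnn_ge _ 10 (5 / 22) (by norm_num) (by push_cast; norm_num) (by push_cast; norm_num)
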